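/- Let $X = (x_1,\dots,x_M) \in (\mathbb{R}^d)^M$, $Y = (y_1,\dots,y_N) \in (\mathbb{R}^d)^N$, $\alpha, \beta$ strictly positive probability vectors, and $c : \mathbb{R}^d \times \mathbb{R}^d \to \mathbb{R}$ continuous. Suppose $\gamma = \sum_{i,j} \hat\gamma_{ij} \delta_{(x_i, y_j)}$ is an optimal transport plan for cost $c$ between $\rho_X = \sum_i \alpha_i \delta_{x_i}$ and $\mu_Y = \sum_j \beta_j \delta_{y_j}$, and there exists a set of points $P = \{(a_i, b_i)\}_{i=1}^n \subset \mathrm{supp}\,\gamma$ with $n \geq 2$, pairwise distinct first coordinates and pairwise distinct second coordinates, such that $\sum_{i=1}^n (c(a_{i+1}, b_i) - c(a_i, b_i)) = 0$ (indices cyclic, $a_{n+1} = a_1$). Then the optimal plan for this transport problem is not unique. -/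

import Mathlib

open MeasureTheory ENNReal Finset

/-- The topological support of a measure: points all of whose open neighbourhoods
have positive measure. -/
def msupport {α : Type*} [TopologicalSpace α] [MeasurableSpace α] (μ : Measure α) : Set α :=
  {x | ∀ U : Set α, IsOpen U → x ∈ U → μ U ≠ 0}

lemma fst_finsum {α β : Type*} [MeasurableSpace α] [MeasurableSpace β]
    {ι : Type*} (s : Finset ι) (μ : ι → Measure (α × β)) :
    (∑ k ∈ s, μ k).fst = ∑ k ∈ s, (μ k).fst := by
  classical
  induction s using Finset.cons_induction with
  | empty => simp [Measure.fst]
  | cons i s hi ih => rw [Finset.sum_cons, Finset.sum_cons, Measure.fst_add, ih]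

lemma snd_finsum {α β : Type*} [MeasurableSpace α] [MeasurableSpace β]
    {ι : Type*} (s : Finset ι) (μ : ι → Measure (α × β)) :
    (∑ k ∈ s, μ k).snd = ∑ k ∈ s, (μ k).snd := by
  classical
  induction s using Finset.cons_induction with
  | empty => simp [Measure.snd]
  | cons i s hi ih => rw [Finset.sum_cons, Finset.sum_cons, Measure.snd_add, ih]

lemma fst_smul_dirac {α β : Type*} [MeasurableSpace α] [MeasurableSpace β]
    (w : ℝ≥0∞) (x : α) (y : β) :
    ((w • Measure.dirac (x, y)) : Measure (α × β)).fst = w • Measure.dirac x := by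
  rw [Measure.fst, Measure.map_smul, Measure.map_dirac' measurable_fst]

lemma snd_smul_dirac {α β : Type*} [MeasurableSpace α] [MeasurableSpace β]
    (w : ℝ≥0∞) (x : α) (y : β) :
    ((w • Measure.dirac (x, y)) : Measure (α × β)).snd = w • Measure.dirac y := by
  rw [Measure.snd, Measure.map_smul, Measure.map_dirac' measurable_snd]

lemma mass_ne_zero {α : Type*} [TopologicalSpace α] [T1Space α] [MeasurableSpace α]
    [OpensMeasurableSpace α]
    {ι : Type*} [Fintype ι] (w : ι → ℝ≥0∞) (x : ι → α) {p : α}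
    (hμ : ∀ U : Set α, IsOpen U → p ∈ U → (∑ i, w i • Measure.dirac (x i)) U ≠ 0) :
    (∑ i, w i • Measure.dirac (x i)) {p} ≠ 0 := by
  classical
  set μ : Measure α := ∑ i, w i • Measure.dirac (x i) with hμdef
  have hSfin : (Set.range x \ {p}).Finite := ((Set.finite_range x).diff)
  have hU : IsOpen (Set.range x \ {p})ᶜ := hSfin.isClosed.isOpen_compl
  have hpU : p ∈ (Set.range x \ {p})ᶜ := fun h => h.2 rfl
  have hne := hμ _ hU hpU
  intro h0
  apply hne
  have hmeasU : MeasurableSet (Set.range x \ {p})ᶜ := hU.measurableSet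
  have hmeasp : MeasurableSet ({p} : Set α) := measurableSet_singleton p
  have : μ (Set.range x \ {p})ᶜ ≤ μ {p} := by
    rw [hμdef]
    rw [Measure.finset_sum_apply, Measure.finset_sum_apply]
    refine Finset.sum_le_sum fun i _ => ?_
    simp only [Measure.smul_apply, smul_eq_mul]
    refine mul_le_mul_right ?_ _
    rw [Measure.dirac_apply' _ hmeasU, Measure.dirac_apply' _ hmeasp]
    by_cases hxi : x i ∈ (Set.range x \ {p})ᶜ
    · have : x i = p := by
        by_contra hne'
        exact hxi ⟨Set.mem_range_self i, hne'⟩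
      simp [Set.indicator, hxi, this]
    · simp [Set.indicator, hxi]
  rw [h0] at this
  exact le_antisymm this (zero_le)

lemma integrable_smul_dirac {α E : Type*} [MeasurableSpace α] [MeasurableSingletonClass α]
    [NormedAddCommGroup E] {f : α → E} (hf : StronglyMeasurable f)
    {w : ℝ≥0∞} (hw : w ≠ ∞) (z : α) :
    Integrable f (w • Measure.dirac z) := by
  by_cases h0 : w = 0
  · simp [h0]
  · rw [integrable_smul_measure h0 hw]
    refine ⟨hf.aestronglyMeasurable, ?_⟩
    rw [HasFiniteIntegral, lintegral_dirac]
    exact ENNReal.coe_lt_top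

theorem not_unique_of_zero_cm_gap {d M N : ℕ}
    (c : EuclideanSpace ℝ (Fin d) → EuclideanSpace ℝ (Fin d) → ℝ)
    (hc : Continuous fun p : EuclideanSpace ℝ (Fin d) × EuclideanSpace ℝ (Fin d) => c p.1 p.2)
    (X : Fin M → EuclideanSpace ℝ (Fin d)) (Y : Fin N → EuclideanSpace ℝ (Fin d))
    (α : Fin M → ℝ) (β : Fin N → ℝ)
    (hα : ∀ i, 0 < α i) (hβ : ∀ j, 0 < β j)
    (hαs : ∑ i, α i = 1) (hβs : ∑ j, β j = 1)
    (γhat : Fin M → Fin N → ℝ) (hγhat : ∀ i j, 0 ≤ γhat i j)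
    (γ : Measure (EuclideanSpace ℝ (Fin d) × EuclideanSpace ℝ (Fin d)))
    (hγdef : γ = ∑ i : Fin M, ∑ j : Fin N,
      ENNReal.ofReal (γhat i j) • Measure.dirac (X i, Y j))
    (hγf : γ.fst = ∑ i : Fin M, ENNReal.ofReal (α i) • Measure.dirac (X i))
    (hγs : γ.snd = ∑ j : Fin N, ENNReal.ofReal (β j) • Measure.dirac (Y j))
    (hopt : ∀ γ' : Measure (EuclideanSpace ℝ (Fin d) × EuclideanSpace ℝ (Fin d)),
      γ'.fst = γ.fst → γ'.snd = γ.snd →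
      ∫ q, c q.1 q.2 ∂γ ≤ ∫ q, c q.1 q.2 ∂γ')
    (n : ℕ) (hn : 2 ≤ n)
    (a b : Fin n → EuclideanSpace ℝ (Fin d))
    (ha : Function.Injective a) (hb : Function.Injective b)
    (hsupp : ∀ k : Fin n, (a k, b k) ∈ msupport γ)
    (hΔ : ∑ k : Fin n, (c (a (finRotate n k)) (b k) - c (a k) (b k)) = 0) :
    ∃ γ' : Measure (EuclideanSpace ℝ (Fin d) × EuclideanSpace ℝ (Fin d)),
      γ'.fst = γ.fst ∧ γ'.snd = γ.snd ∧ γ' ≠ γ ∧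
      ∀ η : Measure (EuclideanSpace ℝ (Fin d) × EuclideanSpace ℝ (Fin d)),
        η.fst = γ.fst → η.snd = γ.snd → ∫ q, c q.1 q.2 ∂γ' ≤ ∫ q, c q.1 q.2 ∂η := by
  classical
  set f : EuclideanSpace ℝ (Fin d) × EuclideanSpace ℝ (Fin d) → ℝ :=
    fun q => c q.1 q.2 with hf
  have hnpos : 0 < n := by omega
  haveI : NeZero n := ⟨by omega⟩
  set σ : Fin n → Fin n := ⇑(finRotate n) with hσ
  set p : Fin n → EuclideanSpace ℝ (Fin d) × EuclideanSpace ℝ (Fin d) := fun k => (a k, b k) with hp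
  set q : Fin n → EuclideanSpace ℝ (Fin d) × EuclideanSpace ℝ (Fin d) := fun k => (a (σ k), b k) with hq
  have hp_inj : Function.Injective p := fun k j h => ha (congrArg Prod.fst h)
  have hσne : ∀ k, σ k ≠ k := by
    intro k hk
    obtain ⟨m, rfl⟩ : ∃ m, n = m + 1 := ⟨n - 1, by omega⟩
    rw [hσ] at hk
    simp only [finRotate_succ_apply] at hk
    have h1 : (1 : Fin (m + 1)) = 0 :=
      add_left_cancel (a := k) (b := (1 : Fin (m+1))) (c := 0) (by rw [add_zero]; exact hk)
    have := Fin.one_eq_zero_iff.mp h1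
    omega
  have hqp : ∀ k j, q k ≠ p j := by
    intro k j hkj
    have hb' : b k = b j := congrArg Prod.snd hkj
    have hk : k = j := hb hb'
    subst hk
    exact hσne k (ha (congrArg Prod.fst hkj))
  -- positive mass at each p k
  have hmass : ∀ k, γ {p k} ≠ 0 := by
    intro k
    have hre : γ = ∑ ij : Fin M × Fin N,
        ENNReal.ofReal (γhat ij.1 ij.2) • Measure.dirac (X ij.1, Y ij.2) := by
      rw [hγdef]
      exact (Fintype.sum_prod_type (f := fun ij : Fin M × Fin N =>
        ENNReal.ofReal (γhat ij.1 ij.2) • Measure.dirac (X ij.1, Y ij.2))).symm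
    rw [hre]
    exact mass_ne_zero _ _ (fun U hU hpU => by rw [← hre]; exact hsupp k U hU hpU)
  -- γ is finite
  have hγuniv : γ Set.univ ≠ ∞ := by
    rw [hγdef]
    rw [Measure.finset_sum_apply]
    refine (ENNReal.sum_lt_top.mpr fun i _ => ?_).ne
    rw [Measure.finset_sum_apply]
    refine ENNReal.sum_lt_top.mpr fun j _ => ?_
    simp [Measure.smul_apply, ENNReal.ofReal_lt_top, ENNReal.mul_lt_top]
  -- the minimal mass ε
  obtain ⟨k₀, -, hk₀⟩ := Finset.exists_mem_eq_inf' (s := (Finset.univ : Finset (Fin n)))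
    ⟨⟨0, hnpos⟩, Finset.mem_univ _⟩ (fun k => γ {p k})
  set ε : ℝ≥0∞ := Finset.univ.inf' ⟨⟨0, hnpos⟩, Finset.mem_univ _⟩ (fun k => γ {p k}) with hε
  have hεle : ∀ k, ε ≤ γ {p k} := fun k => Finset.inf'_le _ (Finset.mem_univ k)
  have hε0 : ε ≠ 0 := by rw [hε] at hk₀ ⊢; rw [hk₀]; exact hmass k₀
  have hεtop : ε ≠ ∞ := by
    rw [hε] at hk₀ ⊢; rw [hk₀]
    exact ((measure_mono (Set.subset_univ _)).trans_lt hγuniv.lt_top).ne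
  set νm : Measure (EuclideanSpace ℝ (Fin d) × EuclideanSpace ℝ (Fin d)) := ∑ k : Fin n, ε • Measure.dirac (p k) with hνm
  set νp : Measure (EuclideanSpace ℝ (Fin d) × EuclideanSpace ℝ (Fin d)) := ∑ k : Fin n, ε • Measure.dirac (q k) with hνp
  -- νm ≤ γ
  have hle : νm ≤ γ := by
    refine Measure.le_iff.mpr fun s hs => ?_
    rw [hνm, Measure.finset_sum_apply]
    have hval : ∀ k : Fin n, (ε • Measure.dirac (p k)) s
        = if p k ∈ s then ε else 0 := by
      intro k
      rw [Measure.smul_apply, smul_eq_mul, Measure.dirac_apply' _ hs]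
      by_cases h : p k ∈ s <;> simp [Set.indicator, h]
    calc ∑ k : Fin n, (ε • Measure.dirac (p k)) s
        = ∑ k ∈ Finset.univ.filter (fun k => p k ∈ s), ε := by
          rw [Finset.sum_filter]; exact Finset.sum_congr rfl fun k _ => hval k
      _ ≤ ∑ k ∈ Finset.univ.filter (fun k => p k ∈ s), γ {p k} :=
          Finset.sum_le_sum fun k _ => hεle k
      _ = γ (⋃ k ∈ Finset.univ.filter (fun k => p k ∈ s), {p k}) := by
          rw [measure_biUnion_finset ?_ (fun k _ => measurableSet_singleton _)]
          intro i hi j hj hij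
          simp only [Set.disjoint_singleton]
          exact fun h => hij (hp_inj h)
      _ ≤ γ s := by
          refine measure_mono ?_
          intro z hz
          simp only [Set.mem_iUnion] at hz
          obtain ⟨k, hk, rfl⟩ := hz
          exact (Finset.mem_filter.mp hk).2
  haveI : IsFiniteMeasure νm := by
    constructor
    rw [hνm, Measure.finset_sum_apply]
    refine ENNReal.sum_lt_top.mpr fun k _ => ?_
    simp [Measure.smul_apply, ENNReal.mul_lt_top, hεtop.lt_top]
  have hcancel : γ - νm + νm = γ := Measure.sub_add_cancel_of_le hle
  set γ' : Measure (EuclideanSpace ℝ (Fin d) × EuclideanSpace ℝ (Fin d)) := (γ - νm) + νp with hγ'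
  refine ⟨γ', ?_, ?_, ?_, ?_⟩
  · -- fst marginal
    have h1 : νp.fst = νm.fst := by
      rw [hνp, hνm, fst_finsum, fst_finsum]
      simp only [hp, hq, fst_smul_dirac]
      exact Equiv.sum_comp (finRotate n) (fun k => ε • Measure.dirac (a k))
    rw [hγ', Measure.fst_add, h1, ← Measure.fst_add, hcancel]
  · have h1 : νp.snd = νm.snd := by
      rw [hνp, hνm, snd_finsum, snd_finsum]
      simp only [hp, hq, snd_smul_dirac]
    rw [hγ', Measure.snd_add, h1, ← Measure.snd_add, hcancel]
  · -- γ' ≠ γ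
    intro hcontra
    have hν_p : νm {p k₀} = ε := by
      rw [hνm, Measure.finset_sum_apply]
      rw [Finset.sum_eq_single k₀]
      · rw [Measure.smul_apply, smul_eq_mul,
          Measure.dirac_apply_of_mem (Set.mem_singleton _), mul_one]
      · intro j _ hj
        rw [Measure.smul_apply, smul_eq_mul, Measure.dirac_apply' _ (measurableSet_singleton _),
          Set.indicator_of_notMem (s := {p k₀}) (a := p j) (fun hm => hj (hp_inj hm)), mul_zero]
      · simp
    have hνp_p : νp {p k₀} = 0 := by
      rw [hνp, Measure.finset_sum_apply]
      refine Finset.sum_eq_zero fun k _ => ?_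
      rw [Measure.smul_apply, smul_eq_mul, Measure.dirac_apply' _ (measurableSet_singleton _),
        Set.indicator_of_notMem (s := {p k₀}) (a := q k) (hqp k k₀), mul_zero]
    have hγp : γ {p k₀} = ε := by rw [hε] at hk₀ ⊢; rw [hk₀]
    have hsub0 : (γ - νm) {p k₀} = 0 := by
      have h := congrArg (fun μ : Measure (EuclideanSpace ℝ (Fin d) × EuclideanSpace ℝ (Fin d)) => μ {p k₀}) hcancel
      simp only [Measure.coe_add, Pi.add_apply] at h
      rw [hν_p, hγp] at h
      exact (ENNReal.add_left_inj hεtop).mp (h.trans (zero_add ε).symm)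
    have hγ'p : γ' {p k₀} = 0 := by
      rw [hγ']
      simp only [Measure.coe_add, Pi.add_apply]
      rw [hsub0, hνp_p, add_zero]
    rw [hcontra] at hγ'p
    exact hε0 (hγp ▸ hγ'p)
  · -- optimality via equal cost
    have hfm : StronglyMeasurable f := by rw [hf]; exact hc.stronglyMeasurable
    have hint_γ : Integrable f γ := by
      rw [hγdef]
      refine integrable_finset_sum_measure.mpr fun i _ => ?_
      refine integrable_finset_sum_measure.mpr fun j _ => ?_
      exact integrable_smul_dirac hfm ENNReal.ofReal_ne_top _
    have hint_sub : Integrable f (γ - νm) := hint_γ.mono_measure Measure.sub_le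
    have hint_νm : Integrable f νm := by
      rw [hνm]
      exact integrable_finset_sum_measure.mpr fun k _ => integrable_smul_dirac hfm hεtop _
    have hint_νp : Integrable f νp := by
      rw [hνp]
      exact integrable_finset_sum_measure.mpr fun k _ => integrable_smul_dirac hfm hεtop _
    have hcost_ν : ∫ z, f z ∂νp = ∫ z, f z ∂νm := by
      rw [hνp, hνm, integral_finset_sum_measure (fun k _ => integrable_smul_dirac hfm hεtop _),
        integral_finset_sum_measure (fun k _ => integrable_smul_dirac hfm hεtop _)]
      simp only [integral_smul_measure, integral_dirac]
      rw [← sub_eq_zero, ← Finset.sum_sub_distrib]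
      have : ∀ k : Fin n, ε.toReal • f (q k) - ε.toReal • f (p k)
          = ε.toReal * (c (a (finRotate n k)) (b k) - c (a k) (b k)) := by
        intro k; simp [hq, hp, hf, hσ, smul_eq_mul, mul_sub]
      rw [Finset.sum_congr rfl fun k _ => this k, ← Finset.mul_sum, hΔ, mul_zero]
    have hcost : ∫ z, f z ∂γ' = ∫ z, f z ∂γ := by
      rw [hγ', integral_add_measure hint_sub hint_νp, hcost_ν,
        ← integral_add_measure hint_sub hint_νm, hcancel]
    intro η hηf hηs
    calc ∫ z, f z ∂γ' = ∫ z, f z ∂γ := hcost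
      _ ≤ ∫ z, f z ∂η := hopt η hηf hηs
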